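/- Under the assumptions of the previous statement, suppose additionally that for each i the routing variable Z is independent of X under E^d_i, with P(Z = e_j) = p_{ij} and P(Z = 0) = p_{i0} = 1 − Σ_j p_{ij}, so that φ^d_{ij}(z) = φ^d_i(z)·p_{ij}. Then the balance equation becomes Σ_{k∈J} λ^e_k·(1 − E^e[z_k^{Y_k}])·φ^e_k(z) + Σ_{i∈J} λ^d_i·φ^d_i(z)·Σ_{j∈J} p_{ij}·(1−z_j) = Σ_{i∈J} λ^d_i·(1−z_i)·φ^d_i(z), where additionally external arrivals occur one queue at a time with per-queue rates λ^e_k and per-queue pre-arrival PGFs φ^e_k. -/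
import Mathlib


open Finset

/-- Corollary 3.4 (equation (3.17)): Markovian-routing specialization, with
routing independent of the pre-departure history (`φ^d_{ij} = p_{ij}·φ^d_i`) and
single (non-simultaneous) external arrivals at each queue. -/
theorem stmt16 (m : ℕ) (z : Fin m → ℝ) (hz : ∀ j, |z j| ≤ 1)
    (lamek EezYk phiek EekXY : Fin m → ℝ)
    (lamd phid EdXY EdXZ : Fin m → ℝ)
    (p : Fin m → Fin m → ℝ) (p0 : Fin m → ℝ)
    (hpnn : ∀ i j, 0 ≤ p i j)
    (hp0 : ∀ i, p0 i = 1 - ∑ j, p i j)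
    (phidij : Fin m → Fin m → ℝ)
    (hrout : ∀ i j, phidij i j = phid i * p i j)
    (hbal : (∑ k, lamek k * (EekXY k - phiek k)) + ∑ i, lamd i * (EdXZ i - phid i)
      = ∑ i, lamd i * (EdXY i - phid i))
    (hindk : ∀ k, EekXY k = EezYk k * phiek k)
    (hY : ∀ i, EdXY i = z i * phid i)
    (hZ : ∀ i, EdXZ i = (∑ j, z j * phidij i j) + (phid i - ∑ j, phidij i j)) :
    (∑ k, lamek k * (1 - EezYk k) * phiek k)
      + ∑ i, lamd i * phid i * ∑ j, p i j * (1 - z j)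
      = ∑ i, lamd i * (1 - z i) * phid i := by
  have h1 : ∑ k, lamek k * (1 - EezYk k) * phiek k
      = -∑ k, lamek k * (EekXY k - phiek k) := by
    rw [← Finset.sum_neg_distrib]
    exact Finset.sum_congr rfl fun k _ => by rw [hindk]; ring
  have h2 : ∑ i, lamd i * phid i * ∑ j, p i j * (1 - z j)
      = -∑ i, lamd i * (EdXZ i - phid i) := by
    rw [← Finset.sum_neg_distrib]
    refine Finset.sum_congr rfl fun i _ => ?_
    have e1 : ∑ j, p i j * (1 - z j) = (∑ j, p i j) - ∑ j, z j * p i j := by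
      rw [← Finset.sum_sub_distrib]
      exact Finset.sum_congr rfl fun j _ => by ring
    have e2 : ∑ j, z j * phidij i j = phid i * ∑ j, z j * p i j := by
      rw [Finset.mul_sum]
      exact Finset.sum_congr rfl fun j _ => by rw [hrout]; ring
    have e3 : ∑ j, phidij i j = phid i * ∑ j, p i j := by
      rw [Finset.mul_sum]
      exact Finset.sum_congr rfl fun j _ => by rw [hrout]
    rw [hZ, e1, e2, e3]; ring
  have h3 : ∑ i, lamd i * (1 - z i) * phid i
      = -∑ i, lamd i * (EdXY i - phid i) := by
    rw [← Finset.sum_neg_distrib]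
    exact Finset.sum_congr rfl fun i _ => by rw [hY]; ring
  rw [h1, h2, h3]
  linarith [hbal]
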